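/- Let p be a prime, r ≥ 1 an integer, and a_{15}, a_{25}, a_{24}, a_{35}, a_{34}, a_{33} nonzero integers divisible by p. Let M_1 have rows (0,a_{15},0,0), (0,0,0,0), (0,0,0,1), (0,0,−1,0); M_2 have rows (0,a_{25},a_{24},0), (0,0,0,1), (0,0,0,0), (0,0,0,0); and M_3 have rows (0,a_{35},a_{34},a_{33}), (0,0,0,0), (0,0,0,0), (0,0,0,0). Then the number of row vectors g ∈ (ℤ/p^rℤ)^4 with gM_i ≡ 0 (mod p^r) for i = 1,2,3 equals p^{min{r, v_p(a_{15}), v_p(a_{25}), v_p(a_{24}), v_p(a_{35}), v_p(a_{34}), v_p(a_{33})}}. (This computes the weight w'(Λ') = 7r_3 − min{r_3, v_p(a_{15}), v_p(a_{25}), v_p(a_{24}), v_p(a_{35}), v_p(a_{34}), v_p(a_{33})} for lattices lifting a plane in the second ruling of the Pfaffian quadric of F_{2,4}.) -/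

import Mathlib

section aux
variable {p r : ℕ}

lemma pow_zero_mod (hr : 1 ≤ r) : ((p : ZMod (p^r)))^r = 0 := by
  have : ((p^r : ℕ) : ZMod (p^r)) = 0 := ZMod.natCast_self _
  push_cast at this
  exact this

lemma mono_ann {k l : ℕ} (hkl : k ≤ l) {x : ZMod (p^r)}
    (h : (p : ZMod (p^r))^k * x = 0) : (p : ZMod (p^r))^l * x = 0 := by
  have : l = (l - k) + k := by omega
  rw [this, pow_add, mul_assoc, h, mul_zero]

lemma min_ann (k l : ℕ) (x : ZMod (p^r)) :
    (p : ZMod (p^r))^(min k l) * x = 0 ↔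
      (p : ZMod (p^r))^k * x = 0 ∧ (p : ZMod (p^r))^l * x = 0 := by
  rcases le_total k l with h | h
  · rw [min_eq_left h]
    exact ⟨fun hx => ⟨hx, mono_ann h hx⟩, fun hx => hx.1⟩
  · rw [min_eq_right h]
    exact ⟨fun hx => ⟨mono_ann h hx, hx⟩, fun hx => hx.2⟩

lemma key_ann (hp : p.Prime) (hr : 1 ≤ r) (a : ℤ) (ha : a ≠ 0) (x : ZMod (p^r)) :
    (a : ZMod (p^r)) * x = 0 ↔ (p : ZMod (p^r))^(min r (padicValInt p a)) * x = 0 := by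
  haveI : Fact p.Prime := ⟨hp⟩
  set v := padicValInt p a with hv
  have hd : (p:ℤ)^v ∣ a := by
    rw [padicValInt_dvd_iff]; exact Or.inr le_rfl
  obtain ⟨b, hb⟩ := hd
  have hpb : ¬ (p:ℤ) ∣ b := by
    intro hpb
    obtain ⟨c, hc⟩ := hpb
    have : (p:ℤ)^(v+1) ∣ a := ⟨c, by rw [hb, hc]; ring⟩
    rw [padicValInt_dvd_iff] at this
    rcases this with h | h
    · exact ha h
    · omega
  have hcop : IsCoprime ((p:ℤ)^r) b :=
    (((Nat.prime_iff_prime_int.mp hp).coprime_iff_not_dvd).mpr hpb).pow_left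
  obtain ⟨u, w, huw⟩ := hcop
  have hbu : IsUnit ((b : ZMod (p^r))) := by
    apply IsUnit.of_mul_eq_one (w : ZMod (p^r))
    have := congrArg (Int.cast : ℤ → ZMod (p^r)) huw
    push_cast at this
    rw [show ((p:ZMod (p^r)))^r = 0 from pow_zero_mod hr, mul_zero, zero_add,
      mul_comm] at this
    exact this
  have hcast : (a : ZMod (p^r)) = (p : ZMod (p^r))^v * (b : ZMod (p^r)) := by
    rw [hb]; push_cast; ring
  rw [hcast]
  have step1 : (p : ZMod (p^r))^v * (b : ZMod (p^r)) * x = 0 ↔ (p : ZMod (p^r))^v * x = 0 := by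
    rw [show (p : ZMod (p^r))^v * (b : ZMod (p^r)) * x
        = (b : ZMod (p^r)) * ((p : ZMod (p^r))^v * x) by ring]
    exact hbu.mul_right_eq_zero
  rw [step1]
  rcases le_total v r with h | h
  · rw [min_eq_right h]
  · rw [min_eq_left h]
    have h1 : (p : ZMod (p^r))^v = 0 := by
      have hv' : v = r + (v - r) := by omega
      rw [hv', pow_add, pow_zero_mod hr, zero_mul]
    simp [h1, pow_zero_mod hr]

lemma count_ann (hp : p.Prime) (m : ℕ) (hm : m ≤ r) :
    Nat.card {x : ZMod (p^r) // (p : ZMod (p^r))^m * x = 0} = p^m := by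
  haveI : NeZero (p^r) := ⟨pow_ne_zero _ hp.pos.ne'⟩
  haveI : NeZero (p^m) := ⟨(pow_pos hp.pos m).ne'⟩
  have hppos := hp.pos
  have hsplit : p^(r-m) * p^m = p^r := by rw [← pow_add]; congr 1; omega
  have e : ZMod (p^m) ≃ {x : ZMod (p^r) // (p : ZMod (p^r))^m * x = 0} := by
    refine ⟨fun y => ⟨((p^(r-m) * y.val : ℕ) : ZMod (p^r)), ?_⟩,
      fun x => ((x.1.val / p^(r-m) : ℕ) : ZMod (p^m)), ?_, ?_⟩
    · have h1 : p^m * (p^(r-m) * y.val) = p^r * y.val := by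
        rw [← mul_assoc, ← pow_add]; congr 2; omega
      have h2 : ((p:ZMod (p^r)))^m * ((p^(r-m) * y.val : ℕ) : ZMod (p^r)) =
          ((p^m * (p^(r-m) * y.val) : ℕ) : ZMod (p^r)) := by push_cast; ring
      rw [h2, h1, Nat.cast_mul, ZMod.natCast_self, zero_mul]
    · intro y
      have hlt : p^(r-m) * y.val < p^r := by
        rw [← hsplit]
        exact Nat.mul_lt_mul_of_pos_left (ZMod.val_lt y) (pow_pos hppos _)
      show (((((p^(r-m) * y.val : ℕ) : ZMod (p^r))).val / p^(r-m) : ℕ) : ZMod (p^m)) = y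
      rw [ZMod.val_cast_of_lt hlt, Nat.mul_div_cancel_left _ (pow_pos hppos _),
        ZMod.natCast_val, ZMod.cast_id]
    · rintro ⟨x, hx⟩
      have h0 : ((p^m * x.val : ℕ) : ZMod (p^r)) = 0 := by
        push_cast
        rw [ZMod.natCast_val, ZMod.cast_id]
        exact hx
      obtain ⟨c, hc⟩ := (ZMod.natCast_eq_zero_iff _ _).mp h0
      have hxval : x.val = p^(r-m) * c := by
        apply Nat.eq_of_mul_eq_mul_left (pow_pos hppos m)
        rw [hc, ← hsplit]; ring
      have hdvd : p^(r-m) ∣ x.val := ⟨c, hxval⟩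
      have hlt2 : x.val / p^(r-m) < p^m := by
        apply Nat.div_lt_of_lt_mul
        calc x.val < p^r := ZMod.val_lt x
          _ = p^(r-m) * p^m := hsplit.symm
      apply Subtype.ext
      show ((p^(r-m) * ((((x.val / p^(r-m) : ℕ) : ZMod (p^m))).val) : ℕ) : ZMod (p^r)) = x
      rw [ZMod.val_cast_of_lt hlt2, ← Nat.mul_div_assoc _ hdvd,
        Nat.mul_div_cancel_left _ (pow_pos hppos _), ZMod.natCast_val, ZMod.cast_id]
  rw [← Nat.card_congr e, Nat.card_zmod]
end aux

lemma min7 (r v1 v2 v3 v4 v5 v6 : ℕ) :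
    min r (min v1 (min v2 (min v3 (min v4 (min v5 v6))))) =
    min (min r v1) (min (min r v2) (min (min r v3) (min (min r v4)
      (min (min r v5) (min r v6))))) := by
  rw [← inf_inf_distrib_left, ← inf_inf_distrib_left, ← inf_inf_distrib_left,
    ← inf_inf_distrib_left, ← inf_inf_distrib_left]

lemma chain_ann {p r : ℕ} (e1 e2 e3 e4 e5 e6 : ℕ) (x : ZMod (p^r)) :
    (p : ZMod (p^r))^(min e1 (min e2 (min e3 (min e4 (min e5 e6))))) * x = 0 ↔
      ((p : ZMod (p^r))^e1 * x = 0 ∧ (p : ZMod (p^r))^e2 * x = 0 ∧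
       (p : ZMod (p^r))^e3 * x = 0 ∧ (p : ZMod (p^r))^e4 * x = 0 ∧
       (p : ZMod (p^r))^e5 * x = 0 ∧ (p : ZMod (p^r))^e6 * x = 0) := by
  rw [min_ann, min_ann, min_ann, min_ann, min_ann]


/-- Counting solutions of the congruence system attached to a lattice lifting a plane in the
second ruling of the Pfaffian quadric of `F_{2,4}`: the number of `g ∈ (ℤ/p^rℤ)^4` with
`gMᵢ ≡ 0 (mod p^r)` for `i = 1,2,3` equals
`p^{min(r, v(a₁₅), v(a₂₅), v(a₂₄), v(a₃₅), v(a₃₄), v(a₃₃))}`. -/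
theorem weight_plane_second_ruling (p : ℕ) (hp : p.Prime) (r : ℕ) (hr : 1 ≤ r)
    (a15 a25 a24 a35 a34 a33 : ℤ)
    (h15 : a15 ≠ 0) (h25 : a25 ≠ 0) (h24 : a24 ≠ 0)
    (h35 : a35 ≠ 0) (h34 : a34 ≠ 0) (h33 : a33 ≠ 0)
    (hp15 : (p : ℤ) ∣ a15) (hp25 : (p : ℤ) ∣ a25) (hp24 : (p : ℤ) ∣ a24)
    (hp35 : (p : ℤ) ∣ a35) (hp34 : (p : ℤ) ∣ a34) (hp33 : (p : ℤ) ∣ a33) :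
    Nat.card {g : Fin 4 → ZMod (p ^ r) //
      Matrix.vecMul g ((!![0, a15, 0, 0; 0, 0, 0, 0; 0, 0, 0, 1; 0, 0, -1, 0] :
          Matrix (Fin 4) (Fin 4) ℤ).map (Int.cast : ℤ → ZMod (p ^ r))) = 0 ∧
      Matrix.vecMul g ((!![0, a25, a24, 0; 0, 0, 0, 1; 0, 0, 0, 0; 0, 0, 0, 0] :
          Matrix (Fin 4) (Fin 4) ℤ).map (Int.cast : ℤ → ZMod (p ^ r))) = 0 ∧
      Matrix.vecMul g ((!![0, a35, a34, a33; 0, 0, 0, 0; 0, 0, 0, 0; 0, 0, 0, 0] :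
          Matrix (Fin 4) (Fin 4) ℤ).map (Int.cast : ℤ → ZMod (p ^ r))) = 0} =
    p ^ (min r (min (padicValInt p a15) (min (padicValInt p a25) (min (padicValInt p a24)
      (min (padicValInt p a35) (min (padicValInt p a34) (padicValInt p a33))))))) := by
  set m := min r (min (padicValInt p a15) (min (padicValInt p a25) (min (padicValInt p a24)
      (min (padicValInt p a35) (min (padicValInt p a34) (padicValInt p a33)))))) with hm
  have hmr : m ≤ r := min_le_left _ _
  have hx : ∀ x : ZMod (p^r),
      (x * (a15 : ZMod (p^r)) = 0 ∧ x * a25 = 0 ∧ x * a24 = 0 ∧ x * a35 = 0 ∧ x * a34 = 0 ∧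
        x * a33 = 0) ↔ (p : ZMod (p^r))^m * x = 0 := by
    intro x
    simp only [mul_comm x]
    rw [key_ann hp hr a15 h15, key_ann hp hr a25 h25, key_ann hp hr a24 h24,
      key_ann hp hr a35 h35, key_ann hp hr a34 h34, key_ann hp hr a33 h33,
      hm.trans (min7 r _ _ _ _ _ _)]
    exact (chain_ann _ _ _ _ _ _ x).symm
  have hchar : ∀ g : Fin 4 → ZMod (p^r),
      (Matrix.vecMul g ((!![0, a15, 0, 0; 0, 0, 0, 0; 0, 0, 0, 1; 0, 0, -1, 0] :
          Matrix (Fin 4) (Fin 4) ℤ).map (Int.cast : ℤ → ZMod (p ^ r))) = 0 ∧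
      Matrix.vecMul g ((!![0, a25, a24, 0; 0, 0, 0, 1; 0, 0, 0, 0; 0, 0, 0, 0] :
          Matrix (Fin 4) (Fin 4) ℤ).map (Int.cast : ℤ → ZMod (p ^ r))) = 0 ∧
      Matrix.vecMul g ((!![0, a35, a34, a33; 0, 0, 0, 0; 0, 0, 0, 0; 0, 0, 0, 0] :
          Matrix (Fin 4) (Fin 4) ℤ).map (Int.cast : ℤ → ZMod (p ^ r))) = 0) ↔
      (g 1 = 0 ∧ g 2 = 0 ∧ g 3 = 0 ∧ (p : ZMod (p^r))^m * g 0 = 0) := by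
    intro g
    rw [← hx (g 0)]
    simp only [Matrix.vecMul, dotProduct, Fin.sum_univ_four, funext_iff,
      Fin.forall_fin_succ, Matrix.map_apply]
    simp [Matrix.vecHead, Matrix.vecTail, Function.comp]
    tauto
  have e : {g : Fin 4 → ZMod (p ^ r) //
      Matrix.vecMul g ((!![0, a15, 0, 0; 0, 0, 0, 0; 0, 0, 0, 1; 0, 0, -1, 0] :
          Matrix (Fin 4) (Fin 4) ℤ).map (Int.cast : ℤ → ZMod (p ^ r))) = 0 ∧
      Matrix.vecMul g ((!![0, a25, a24, 0; 0, 0, 0, 1; 0, 0, 0, 0; 0, 0, 0, 0] :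
          Matrix (Fin 4) (Fin 4) ℤ).map (Int.cast : ℤ → ZMod (p ^ r))) = 0 ∧
      Matrix.vecMul g ((!![0, a35, a34, a33; 0, 0, 0, 0; 0, 0, 0, 0; 0, 0, 0, 0] :
          Matrix (Fin 4) (Fin 4) ℤ).map (Int.cast : ℤ → ZMod (p ^ r))) = 0} ≃
      {x : ZMod (p^r) // (p : ZMod (p^r))^m * x = 0} := by
    refine ⟨fun g => ⟨g.1 0, ((hchar g.1).mp g.2).2.2.2⟩,
      fun x => ⟨![x.1, 0, 0, 0], (hchar _).mpr ?_⟩, ?_, ?_⟩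
    · refine ⟨rfl, rfl, rfl, ?_⟩
      show (p : ZMod (p^r))^m * x.1 = 0
      exact x.2
    · rintro ⟨g, hg⟩
      obtain ⟨h1, h2, h3, -⟩ := (hchar g).mp hg
      apply Subtype.ext
      funext i
      fin_cases i <;> simp [h1, h2, h3]
    · rintro ⟨x, hxx⟩
      rfl
  rw [Nat.card_congr e, count_ann hp m hmr]
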